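/- For matrices A ∈ ℝ^{m×p} and B ∈ ℝ^{m×q}, the nuclear norm of their column-wise concatenation [A, B] satisfies ‖[A, B]‖_* ≤ ‖A‖_* + ‖B‖_*. -/

import Mathlib

open Matrix Finset

/-- The nuclear norm of a real matrix: the sum of its singular values,
i.e. the sum of the square roots of the eigenvalues of `Aᴴ * A`. -/
noncomputable def nuclearNorm {m n : Type*} [Fintype m] [Fintype n] [DecidableEq n]
    (A : Matrix m n ℝ) : ℝ :=
  ∑ i, Real.sqrt ((Matrix.isHermitian_conjTranspose_mul_self A).eigenvalues i)

section aux

variable {ι κ : Type*} [Fintype ι] [Fintype κ]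

lemma dot_sum_right (a : κ → ℝ) (f : ι → κ → ℝ) :
    a ⬝ᵥ (∑ i, f i) = ∑ i, a ⬝ᵥ f i := by
  simp only [dotProduct, Finset.sum_apply, Finset.mul_sum]
  exact Finset.sum_comm

lemma dot_self_nonneg (a : κ → ℝ) : 0 ≤ a ⬝ᵥ a :=
  Finset.sum_nonneg fun k _ => mul_self_nonneg _

/-- Bessel's inequality for a family of pairwise-orthogonal vectors of norm at most 1. -/
lemma bessel_aux (u : ι → κ → ℝ)
    (horth : ∀ i j, i ≠ j → u i ⬝ᵥ u j = 0)
    (hnorm : ∀ i, u i ⬝ᵥ u i ≤ 1) (a : κ → ℝ) :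
    ∑ i, (a ⬝ᵥ u i) ^ 2 ≤ a ⬝ᵥ a := by
  set t : ι → ℝ := fun i => a ⬝ᵥ u i with ht
  set s : κ → ℝ := ∑ i, t i • u i with hs
  have hrfl : ∀ i, a ⬝ᵥ u i = t i := fun _ => rfl
  have has : a ⬝ᵥ s = ∑ i, t i ^ 2 := by
    rw [hs, dot_sum_right]
    refine Finset.sum_congr rfl fun i _ => ?_
    rw [dotProduct_smul, smul_eq_mul, hrfl]
    ring
  have hds : ∀ j, u j ⬝ᵥ s = t j * (u j ⬝ᵥ u j) := by
    intro j
    rw [hs, dot_sum_right]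
    rw [Finset.sum_eq_single j]
    · rw [dotProduct_smul, smul_eq_mul]
    · intro i _ hij
      rw [dotProduct_smul, smul_eq_mul, dotProduct_comm, horth i j (by simpa using hij),
        mul_zero]
    · simp
  have hss : s ⬝ᵥ s = ∑ j, t j * (t j * (u j ⬝ᵥ u j)) := by
    rw [dotProduct_comm, dot_sum_right]
    refine Finset.sum_congr rfl fun j _ => ?_
    rw [dotProduct_smul, smul_eq_mul, dotProduct_comm, hds j]
  have h0 : 0 ≤ (a - s) ⬝ᵥ (a - s) := dot_self_nonneg _
  have hexp : (a - s) ⬝ᵥ (a - s) = a ⬝ᵥ a - 2 * (a ⬝ᵥ s) + s ⬝ᵥ s := by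
    rw [sub_dotProduct, dotProduct_sub, dotProduct_sub, dotProduct_comm s a]
    ring
  have hb : s ⬝ᵥ s ≤ ∑ j, t j ^ 2 := by
    rw [hss]
    refine Finset.sum_le_sum fun j _ => ?_
    nlinarith [hnorm j, sq_nonneg (t j)]
  rw [hexp, has] at h0
  have : ∑ i, (a ⬝ᵥ u i) ^ 2 = ∑ i, t i ^ 2 := rfl
  rw [this]
  linarith

lemma inner_eq_dot (a b : EuclideanSpace ℝ κ) :
    (inner ℝ a b : ℝ) = (a : κ → ℝ) ⬝ᵥ (b : κ → ℝ) := by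
  rw [EuclideanSpace.inner_eq_star_dotProduct]
  rw [star_trivial, dotProduct_comm]

end aux

/-- Key lemma: pairing a matrix against two Bessel families is at most the nuclear norm. -/
lemma sum_dot_mulVec_le {m' n' ι : Type*} [Fintype m'] [Fintype n'] [DecidableEq n'] [Fintype ι]
    (A : Matrix m' n' ℝ) (u : ι → m' → ℝ) (x : ι → n' → ℝ)
    (hu : ∀ a : m' → ℝ, ∑ i, (a ⬝ᵥ u i) ^ 2 ≤ a ⬝ᵥ a)
    (hx : ∀ w : n' → ℝ, ∑ i, (w ⬝ᵥ x i) ^ 2 ≤ w ⬝ᵥ w) :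
    ∑ i, u i ⬝ᵥ (A *ᵥ x i) ≤ nuclearNorm A := by
  have h := Matrix.isHermitian_conjTranspose_mul_self A
  set b := h.eigenvectorBasis with hb
  set lam := h.eigenvalues with hlam
  have hlam0 : ∀ j, 0 ≤ lam j := fun j =>
    Matrix.eigenvalues_conjTranspose_mul_self_nonneg A j
  set w : n' → n' → ℝ := fun j => ⇑(b j) with hw
  have hmv : ∀ j, (Aᴴ * A) *ᵥ w j = lam j • w j := fun j => h.mulVec_eigenvectorBasis j
  have hdotAA : ∀ (y z : n' → ℝ), (A *ᵥ y) ⬝ᵥ (A *ᵥ z) = y ⬝ᵥ ((Aᴴ * A) *ᵥ z) := by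
    intro y z
    have hAH : Aᴴ = Aᵀ := by ext i j; simp [Matrix.conjTranspose_apply]
    rw [hAH, ← Matrix.mulVec_mulVec, Matrix.dotProduct_mulVec y, Matrix.vecMul_transpose]
  have hww : ∀ i j, w i ⬝ᵥ w j = if i = j then 1 else 0 := by
    intro i j
    have := (orthonormal_iff_ite.mp b.orthonormal) i j
    rw [← inner_eq_dot]
    simpa using this
  have hAwAw : ∀ j, (A *ᵥ w j) ⬝ᵥ (A *ᵥ w j) = lam j := by
    intro j
    rw [hdotAA, hmv, dotProduct_smul, smul_eq_mul, hww]
    simp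
  have hterm : ∀ i, u i ⬝ᵥ (A *ᵥ x i) =
      ∑ j, (w j ⬝ᵥ x i) * ((A *ᵥ w j) ⬝ᵥ u i) := by
    intro i
    have hp := b.sum_inner_mul_inner (𝕜 := ℝ)
      (WithLp.toLp 2 (u i ᵥ* A : n' → ℝ) : EuclideanSpace ℝ n') (WithLp.toLp 2 (x i : n' → ℝ) : EuclideanSpace ℝ n')
    simp only [inner_eq_dot] at hp
    calc u i ⬝ᵥ (A *ᵥ x i) = (u i ᵥ* A) ⬝ᵥ x i := Matrix.dotProduct_mulVec _ _ _
      _ = ∑ j, ((u i ᵥ* A) ⬝ᵥ w j) * (w j ⬝ᵥ x i) := hp.symm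
      _ = ∑ j, (w j ⬝ᵥ x i) * ((A *ᵥ w j) ⬝ᵥ u i) := by
          refine Finset.sum_congr rfl fun j _ => ?_
          rw [← Matrix.dotProduct_mulVec, dotProduct_comm (u i) (A *ᵥ w j)]
          ring
  calc ∑ i, u i ⬝ᵥ (A *ᵥ x i)
      = ∑ j, ∑ i, (w j ⬝ᵥ x i) * ((A *ᵥ w j) ⬝ᵥ u i) := by
        rw [← Finset.sum_comm]
        exact Finset.sum_congr rfl fun i _ => hterm i
    _ ≤ ∑ j, Real.sqrt (lam j) := by
        refine Finset.sum_le_sum fun j _ => ?_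
        have hcs := Finset.sum_mul_sq_le_sq_mul_sq Finset.univ
          (fun i => w j ⬝ᵥ x i) (fun i => (A *ᵥ w j) ⬝ᵥ u i)
        have h1 : ∑ i, (w j ⬝ᵥ x i) ^ 2 ≤ 1 := by
          have := hx (w j)
          rw [hww j j] at this
          simpa using this
        have h2 : ∑ i, ((A *ᵥ w j) ⬝ᵥ u i) ^ 2 ≤ lam j := by
          have := hu (A *ᵥ w j)
          rwa [hAwAw j] at this
        have hsq : (∑ i, (w j ⬝ᵥ x i) * ((A *ᵥ w j) ⬝ᵥ u i)) ^ 2 ≤ lam j := by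
          refine hcs.trans ?_
          have hn1 : (0:ℝ) ≤ ∑ i, ((A *ᵥ w j) ⬝ᵥ u i) ^ 2 :=
            Finset.sum_nonneg fun i _ => sq_nonneg _
          calc (∑ i, (w j ⬝ᵥ x i) ^ 2) * ∑ i, ((A *ᵥ w j) ⬝ᵥ u i) ^ 2
              ≤ 1 * lam j := mul_le_mul h1 h2 hn1 zero_le_one
            _ = lam j := one_mul _
        calc ∑ i, (w j ⬝ᵥ x i) * ((A *ᵥ w j) ⬝ᵥ u i)
            ≤ |∑ i, (w j ⬝ᵥ x i) * ((A *ᵥ w j) ⬝ᵥ u i)| := le_abs_self _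
          _ = Real.sqrt ((∑ i, (w j ⬝ᵥ x i) * ((A *ᵥ w j) ⬝ᵥ u i)) ^ 2) :=
              (Real.sqrt_sq_eq_abs _).symm
          _ ≤ Real.sqrt (lam j) := Real.sqrt_le_sqrt hsq
    _ = nuclearNorm A := rfl

theorem nuclearNorm_fromColumns_le {m p q : ℕ}
    (A : Matrix (Fin m) (Fin p) ℝ) (B : Matrix (Fin m) (Fin q) ℝ) :
    nuclearNorm (Matrix.fromCols A B) ≤ nuclearNorm A + nuclearNorm B := by
  set M := Matrix.fromCols A B with hM
  have h := Matrix.isHermitian_conjTranspose_mul_self M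
  set b := h.eigenvectorBasis with hb
  set lam := h.eigenvalues with hlam
  have hlam0 : ∀ i, 0 ≤ lam i := fun i =>
    Matrix.eigenvalues_conjTranspose_mul_self_nonneg M i
  set v : (Fin p ⊕ Fin q) → (Fin p ⊕ Fin q) → ℝ := fun i => ⇑(b i) with hv
  set s : (Fin p ⊕ Fin q) → Fin m → ℝ := fun i => M *ᵥ v i with hsdef
  set u : (Fin p ⊕ Fin q) → Fin m → ℝ := fun i => (Real.sqrt (lam i))⁻¹ • s i with hu
  have hmv : ∀ i, (Mᴴ * M) *ᵥ v i = lam i • v i := fun i => h.mulVec_eigenvectorBasis i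
  have hdotMM : ∀ (y z : (Fin p ⊕ Fin q) → ℝ),
      (M *ᵥ y) ⬝ᵥ (M *ᵥ z) = y ⬝ᵥ ((Mᴴ * M) *ᵥ z) := by
    intro y z
    have hMH : Mᴴ = Mᵀ := by ext i j; simp [Matrix.conjTranspose_apply]
    rw [hMH, ← Matrix.mulVec_mulVec, Matrix.dotProduct_mulVec y, Matrix.vecMul_transpose]
  have hvv : ∀ i j, v i ⬝ᵥ v j = if i = j then 1 else 0 := by
    intro i j
    have := (orthonormal_iff_ite.mp b.orthonormal) i j
    rw [← inner_eq_dot]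
    simpa using this
  have hss : ∀ i j, s i ⬝ᵥ s j = if i = j then lam j else 0 := by
    intro i j
    rw [hsdef]
    simp only
    rw [hdotMM, hmv, dotProduct_smul, smul_eq_mul, hvv]
    by_cases hij : i = j <;> simp [hij]
  -- the two half families
  set xf : (Fin p ⊕ Fin q) → Fin p → ℝ := fun i k => v i (Sum.inl k) with hxf
  set yf : (Fin p ⊕ Fin q) → Fin q → ℝ := fun i k => v i (Sum.inr k) with hyf
  have hvelim : ∀ i, v i = Sum.elim (xf i) (yf i) := by
    intro i; funext k; cases k <;> rfl
  have hsplit : ∀ i, s i = A *ᵥ xf i + B *ᵥ yf i := by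
    intro i
    rw [hsdef]
    simp only
    rw [hvelim i, hM, fromCols_mulVec_sumElim]
  -- nuclear norm of M as a pairing
  have hpair : ∀ i, Real.sqrt (lam i) = u i ⬝ᵥ s i := by
    intro i
    rw [hu]
    simp only
    rw [smul_dotProduct, smul_eq_mul, hss, if_pos rfl, inv_mul_eq_div, Real.div_sqrt]
  -- Bessel hypothesis for u
  have hubessel : ∀ a : Fin m → ℝ, ∑ i, (a ⬝ᵥ u i) ^ 2 ≤ a ⬝ᵥ a := by
    apply bessel_aux
    · intro i j hij
      rw [hu]
      simp only
      rw [smul_dotProduct, dotProduct_smul, smul_eq_mul, smul_eq_mul, hss, if_neg hij]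
      ring
    · intro i
      rw [hu]
      simp only
      rw [smul_dotProduct, dotProduct_smul, smul_eq_mul, smul_eq_mul, hss, if_pos rfl]
      by_cases h0 : lam i = 0
      · simp [h0]
      · have hpos : 0 < lam i := lt_of_le_of_ne (hlam0 i) (Ne.symm h0)
        have : Real.sqrt (lam i) * Real.sqrt (lam i) = lam i :=
          Real.mul_self_sqrt (hlam0 i)
        have hs0 : Real.sqrt (lam i) ≠ 0 := by positivity
        have heq : (Real.sqrt (lam i))⁻¹ * ((Real.sqrt (lam i))⁻¹ * lam i) = 1 := by
          rw [← mul_assoc, ← mul_inv, this, inv_mul_cancel₀ (ne_of_gt hpos)]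
        exact le_of_eq heq
  -- Bessel (Parseval) hypothesis for xf
  have hxbessel : ∀ wv : Fin p → ℝ, ∑ i, (wv ⬝ᵥ xf i) ^ 2 ≤ wv ⬝ᵥ wv := by
    intro wv
    have hp := b.sum_inner_mul_inner (𝕜 := ℝ)
      (WithLp.toLp 2 (Sum.elim wv 0 : (Fin p ⊕ Fin q) → ℝ) : EuclideanSpace ℝ (Fin p ⊕ Fin q))
      (WithLp.toLp 2 (Sum.elim wv 0 : (Fin p ⊕ Fin q) → ℝ) : EuclideanSpace ℝ (Fin p ⊕ Fin q))
    simp only [inner_eq_dot] at hp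
    have hp' : ∑ i, ((Sum.elim wv (0:Fin q → ℝ)) ⬝ᵥ v i) * (v i ⬝ᵥ (Sum.elim wv (0:Fin q → ℝ)))
        = (Sum.elim wv (0:Fin q → ℝ)) ⬝ᵥ (Sum.elim wv (0:Fin q → ℝ)) := hp
    have key : ∀ i, (Sum.elim wv (0 : Fin q → ℝ)) ⬝ᵥ v i = wv ⬝ᵥ xf i := by
      intro i
      rw [hvelim i, sumElim_dotProduct_sumElim, zero_dotProduct, add_zero]
    have h2 : (Sum.elim wv (0 : Fin q → ℝ)) ⬝ᵥ (Sum.elim wv (0 : Fin q → ℝ)) = wv ⬝ᵥ wv := by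
      rw [sumElim_dotProduct_sumElim, zero_dotProduct, add_zero]
    calc ∑ i, (wv ⬝ᵥ xf i) ^ 2
        = ∑ i, ((Sum.elim wv (0:Fin q → ℝ)) ⬝ᵥ v i) * (v i ⬝ᵥ (Sum.elim wv (0:Fin q → ℝ))) := by
          refine Finset.sum_congr rfl fun i _ => ?_
          rw [key i, dotProduct_comm (v i), key i]
          ring
      _ = wv ⬝ᵥ wv := by rw [hp', h2]
      _ ≤ wv ⬝ᵥ wv := le_refl _
  have hybessel : ∀ wv : Fin q → ℝ, ∑ i, (wv ⬝ᵥ yf i) ^ 2 ≤ wv ⬝ᵥ wv := by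
    intro wv
    have hp := b.sum_inner_mul_inner (𝕜 := ℝ)
      (WithLp.toLp 2 (Sum.elim 0 wv : (Fin p ⊕ Fin q) → ℝ) : EuclideanSpace ℝ (Fin p ⊕ Fin q))
      (WithLp.toLp 2 (Sum.elim 0 wv : (Fin p ⊕ Fin q) → ℝ) : EuclideanSpace ℝ (Fin p ⊕ Fin q))
    simp only [inner_eq_dot] at hp
    have hp' : ∑ i, ((Sum.elim (0:Fin p → ℝ) wv) ⬝ᵥ v i) * (v i ⬝ᵥ (Sum.elim (0:Fin p → ℝ) wv))
        = (Sum.elim (0:Fin p → ℝ) wv) ⬝ᵥ (Sum.elim (0:Fin p → ℝ) wv) := hp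
    have key : ∀ i, (Sum.elim (0 : Fin p → ℝ) wv) ⬝ᵥ v i = wv ⬝ᵥ yf i := by
      intro i
      rw [hvelim i, sumElim_dotProduct_sumElim, zero_dotProduct, zero_add]
    have h2 : (Sum.elim (0 : Fin p → ℝ) wv) ⬝ᵥ (Sum.elim (0 : Fin p → ℝ) wv) = wv ⬝ᵥ wv := by
      rw [sumElim_dotProduct_sumElim, zero_dotProduct, zero_add]
    calc ∑ i, (wv ⬝ᵥ yf i) ^ 2
        = ∑ i, ((Sum.elim (0:Fin p → ℝ) wv) ⬝ᵥ v i) * (v i ⬝ᵥ (Sum.elim (0:Fin p → ℝ) wv)) := by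
          refine Finset.sum_congr rfl fun i _ => ?_
          rw [key i, dotProduct_comm (v i), key i]
          ring
      _ = wv ⬝ᵥ wv := by rw [hp', h2]
      _ ≤ wv ⬝ᵥ wv := le_refl _
  -- conclude
  have hnn : nuclearNorm M = ∑ i, u i ⬝ᵥ s i := by
    rw [show nuclearNorm M = ∑ i, Real.sqrt (lam i) from rfl]
    exact Finset.sum_congr rfl fun i _ => hpair i
  calc nuclearNorm M = ∑ i, u i ⬝ᵥ s i := hnn
    _ = ∑ i, (u i ⬝ᵥ (A *ᵥ xf i) + u i ⬝ᵥ (B *ᵥ yf i)) := by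
        refine Finset.sum_congr rfl fun i _ => ?_
        rw [hsplit i, dotProduct_add]
    _ = (∑ i, u i ⬝ᵥ (A *ᵥ xf i)) + ∑ i, u i ⬝ᵥ (B *ᵥ yf i) := Finset.sum_add_distrib
    _ ≤ nuclearNorm A + nuclearNorm B :=
        add_le_add (sum_dot_mulVec_le A u xf hubessel hxbessel)
          (sum_dot_mulVec_le B u yf hubessel hybessel)
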